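/- The Laplace mechanism with scale Δ/ε is (ε,0)-differentially private: if f : D → ℝ^k has ℓ1-sensitivity at most Δ on neighboring databases, then the mechanism A(D) = f(D) + (Y₁,…,Y_k) with i.i.d. Y_i ~ Lap(Δ/ε) satisfies, for all neighboring D₁, D₂ and all measurable S ⊆ ℝ^k, Pr[A(D₁) ∈ S] ≤ e^ε · Pr[A(D₂) ∈ S]. -/

import Mathlib

open MeasureTheory Real

open ENNReal in

theorem lintegral_pi_prod {ι : Type*} [Fintype ι] [DecidableEq ι] {α : ι → Type*}
    [∀ i, MeasurableSpace (α i)] (μ : ∀ i, Measure (α i)) [∀ i, SigmaFinite (μ i)]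
    (h : ∀ i, α i → ℝ≥0∞) (hm : ∀ i, Measurable (h i)) (x : ∀ i, α i) :
    ∫⁻ y, ∏ i, h i (y i) ∂Measure.pi μ = ∏ i, ∫⁻ t, h i t ∂μ i := by
  have hF : Measurable fun y : ∀ i, α i => ∏ i, h i (y i) :=
    Finset.measurable_prod _ fun i _ => (hm i).comp (measurable_pi_apply i)
  have key : ∀ s : Finset ι, ∀ x : ∀ i, α i,
      (∫⋯∫⁻_s, (fun y => ∏ i, h i (y i)) ∂μ) x
        = (∏ i ∈ s, ∫⁻ t, h i t ∂μ i) * ∏ i ∈ sᶜ, h i (x i) := by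
    intro s
    induction s using Finset.induction_on with
    | empty => intro x; simp
    | @insert i s hi ih =>
      intro x
      rw [lmarginal_insert _ hF hi]
      have hic : i ∈ sᶜ := Finset.mem_compl.mpr hi
      have step : ∀ t, (∫⋯∫⁻_s, (fun y => ∏ j, h j (y j)) ∂μ) (Function.update x i t)
          = ((∏ j ∈ s, ∫⁻ u, h j u ∂μ j) * ∏ j ∈ sᶜ.erase i, h j (x j)) * h i t := by
        intro t
        rw [ih]
        rw [← Finset.mul_prod_erase sᶜ (fun j => h j (Function.update x i t j)) hic]
        have h1 : Function.update x i t i = t := Function.update_self i t x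
        have h2 : ∏ j ∈ sᶜ.erase i, h j (Function.update x i t j)
            = ∏ j ∈ sᶜ.erase i, h j (x j) := by
          refine Finset.prod_congr rfl fun j hj => ?_
          rw [Function.update_of_ne (Finset.mem_erase.mp hj).1]
        rw [h1, h2]; ring
      simp_rw [step]
      rw [lintegral_const_mul _ (hm i), Finset.prod_insert hi, Finset.compl_insert]
      ring
  rw [lintegral_eq_lmarginal_univ x, key Finset.univ x]
  simp

open ENNReal in
theorem pi_withDensity_eq {k : ℕ} (g₀ : ℝ → ℝ) (hg₀ : Measurable g₀) :
    Measure.pi (fun _ : Fin k => volume.withDensity fun t => ENNReal.ofReal (g₀ t))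
      = (volume : Measure (Fin k → ℝ)).withDensity
          (fun y => ∏ i, ENNReal.ofReal (g₀ (y i))) := by
  set g : ℝ → ℝ≥0∞ := fun t => ENNReal.ofReal (g₀ t) with hgdef
  have hg : Measurable g := hg₀.ennreal_ofReal
  refine Measure.pi_eq (μ := fun _ : Fin k => volume.withDensity g) fun s hs => ?_
  have hG : Measurable fun y : Fin k → ℝ => ∏ i, g (y i) :=
    Finset.measurable_prod _ fun i _ => hg.comp (measurable_pi_apply i)
  rw [withDensity_apply _ (MeasurableSet.univ_pi hs), ← lintegral_indicator (MeasurableSet.univ_pi hs) _]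
  have hind : ∀ y : Fin k → ℝ,
      (Set.univ.pi s).indicator (fun y => ∏ i, g (y i)) y
        = ∏ i, (s i).indicator g (y i) := by
    intro y
    by_cases hy : y ∈ Set.univ.pi s
    · rw [Set.indicator_of_mem hy]
      exact Finset.prod_congr rfl fun i _ =>
        (Set.indicator_of_mem (hy i (Set.mem_univ i)) g).symm
    · rw [Set.indicator_of_notMem hy]
      have hex : ∃ i, y i ∉ s i := by
        by_contra hcon
        push_neg at hcon
        exact hy fun i _ => hcon i
      obtain ⟨i, hi⟩ := hex
      exact (Finset.prod_eq_zero (Finset.mem_univ i)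
        (Set.indicator_of_notMem hi g)).symm
  change ∫⁻ y, (Set.univ.pi s).indicator (fun y => ∏ i, g (y i)) y ∂volume = _
  simp_rw [hind]
  rw [volume_pi, lintegral_pi_prod _ _ (fun i => hg.indicator (hs i)) (fun _ => 0)]
  exact Finset.prod_congr rfl fun i _ => by
    rw [lintegral_indicator (hs i), withDensity_apply _ (hs i)]


/-- The Laplace distribution with scale `b`. -/
noncomputable def laplaceMeasure (b : ℝ) : Measure ℝ :=
  volume.withDensity (fun y => ENNReal.ofReal ((1 / (2 * b)) * Real.exp (-|y| / b)))

/-- The Laplace mechanism: add i.i.d. `Lap(Δ/ε)` noise to each coordinate of `f D`. -/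
noncomputable def laplaceMechanism {D : Type*} (k : ℕ) (f : D → Fin k → ℝ) (b : ℝ)
    (d : D) : Measure (Fin k → ℝ) :=
  Measure.map (fun y i => f d i + y i) (Measure.pi (fun _ : Fin k => laplaceMeasure b))

/-- The Laplace mechanism with scale `Δ/ε` is `(ε,0)`-differentially private: if `f` has
ℓ1-sensitivity at most `Δ` on neighboring databases, then for all neighboring `D₁, D₂` and
all measurable `S`, `Pr[A(D₁) ∈ S] ≤ e^ε · Pr[A(D₂) ∈ S]`. -/
theorem laplace_mechanism_dp {D : Type*} (neighbor : D → D → Prop) (k : ℕ)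
    (f : D → Fin k → ℝ) (Δ ε : ℝ) (hΔ : 0 < Δ) (hε : 0 < ε)
    (hsens : ∀ D₁ D₂, neighbor D₁ D₂ → ∑ i, |f D₁ i - f D₂ i| ≤ Δ) :
    ∀ D₁ D₂, neighbor D₁ D₂ → ∀ S : Set (Fin k → ℝ), MeasurableSet S →
      laplaceMechanism k f (Δ / ε) D₁ S ≤
        ENNReal.ofReal (Real.exp ε) * laplaceMechanism k f (Δ / ε) D₂ S := by
  intro D₁ D₂ hnb S hS
  set b : ℝ := Δ / ε with hbdef
  have hb : 0 < b := div_pos hΔ hε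
  set g₀ : ℝ → ℝ := fun t => (1 / (2 * b)) * Real.exp (-|t| / b) with hg₀def
  have hg₀ : Measurable g₀ := by
    apply Measurable.mul measurable_const
    exact (measurable_norm.neg.div_const b).exp
  have hg₀nn : ∀ t, 0 ≤ g₀ t := fun t =>
    mul_nonneg (by positivity) (exp_nonneg _)
  -- the mechanism as an explicit integral
  have hmech : ∀ d : D, laplaceMechanism k f b d S
      = ∫⁻ x, S.indicator (fun u => ∏ i, ENNReal.ofReal (g₀ (u i - f d i))) x
          ∂(volume : Measure (Fin k → ℝ)) := by
    intro d
    have hT : Measurable (fun y : Fin k → ℝ => fun i => f d i + y i) :=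
      measurable_pi_iff.mpr fun i => (measurable_pi_apply i).const_add _
    have hPi : Measure.pi (fun _ : Fin k => laplaceMeasure b)
        = (volume : Measure (Fin k → ℝ)).withDensity
            (fun y => ∏ i, ENNReal.ofReal (g₀ (y i))) := pi_withDensity_eq g₀ hg₀
    have hGm : Measurable fun y : Fin k → ℝ => ∏ i, ENNReal.ofReal (g₀ (y i)) :=
      Finset.measurable_prod _ fun i _ =>
        (hg₀.comp (measurable_pi_apply i)).ennreal_ofReal
    rw [laplaceMechanism, Measure.map_apply hT hS, hPi,
      withDensity_apply _ (hT hS), ← lintegral_indicator (hT hS) _]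
    have hindic : ∀ y : Fin k → ℝ,
        ((fun y : Fin k → ℝ => fun i => f d i + y i) ⁻¹' S).indicator
            (fun y => ∏ i, ENNReal.ofReal (g₀ (y i))) y
          = S.indicator (fun u => ∏ i, ENNReal.ofReal (g₀ (u i - f d i))) (f d + y) := by
      intro y
      have hmem : (f d + y ∈ S) ↔
          (y ∈ (fun y : Fin k → ℝ => fun i => f d i + y i) ⁻¹' S) := Iff.rfl
      by_cases hy : y ∈ (fun y : Fin k → ℝ => fun i => f d i + y i) ⁻¹' S
      · rw [Set.indicator_of_mem hy, Set.indicator_of_mem (hmem.mpr hy)]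
        refine Finset.prod_congr rfl fun i _ => ?_
        have : (f d + y) i - f d i = y i := by simp
        rw [this]
      · rw [Set.indicator_of_notMem hy,
          Set.indicator_of_notMem (fun h => hy (hmem.mp h))]
    simp_rw [hindic]
    rw [volume_pi,
      lintegral_add_left_eq_self
        (S.indicator fun u => ∏ i, ENNReal.ofReal (g₀ (u i - f d i))) (f d)]
  rw [hmech D₁, hmech D₂, ← lintegral_const_mul' _ _ ENNReal.ofReal_ne_top]
  refine lintegral_mono fun x => ?_
  by_cases hx : x ∈ S
  · rw [Set.indicator_of_mem hx, Set.indicator_of_mem hx]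
    -- pointwise density ratio bound
    have hprod : ∀ c : Fin k → ℝ, ∏ i, ENNReal.ofReal (g₀ (x i - c i))
        = ENNReal.ofReal ((1 / (2 * b)) ^ k * Real.exp (∑ i, -|x i - c i| / b)) := by
      intro c
      rw [← ENNReal.ofReal_prod_of_nonneg fun i _ => hg₀nn _]
      congr 1
      rw [Finset.prod_mul_distrib, Finset.prod_const, Real.exp_sum]
      simp [Finset.card_univ]
    rw [hprod, hprod, ← ENNReal.ofReal_mul (exp_nonneg ε)]
    apply ENNReal.ofReal_le_ofReal
    rw [mul_comm (Real.exp ε), mul_assoc, ← Real.exp_add]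
    apply mul_le_mul_of_nonneg_left _ (by positivity)
    rw [Real.exp_le_exp]
    have hstep : ∑ i, -|x i - f D₁ i| / b - ∑ i, -|x i - f D₂ i| / b ≤ ε := by
      rw [← Finset.sum_sub_distrib]
      have : ∀ i, -|x i - f D₁ i| / b - -|x i - f D₂ i| / b
          ≤ |f D₁ i - f D₂ i| / b := by
        intro i
        rw [div_sub_div_same, div_le_div_iff_of_pos_right hb]
        have h1 : |x i - f D₂ i| - |x i - f D₁ i| ≤ |f D₁ i - f D₂ i| := by
          have := abs_sub_abs_le_abs_sub (x i - f D₂ i) (x i - f D₁ i)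
          simpa [sub_sub_sub_cancel_left] using this
        linarith
      calc ∑ i, (-|x i - f D₁ i| / b - -|x i - f D₂ i| / b)
          ≤ ∑ i, |f D₁ i - f D₂ i| / b := Finset.sum_le_sum fun i _ => this i
        _ = (∑ i, |f D₁ i - f D₂ i|) / b := by rw [Finset.sum_div]
        _ ≤ Δ / b := by
            apply div_le_div_of_nonneg_right (hsens D₁ D₂ hnb) hb.le
        _ = ε := by rw [hbdef]; field_simp
    linarith
  · rw [Set.indicator_of_notMem hx, Set.indicator_of_notMem hx]
    simp
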